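/- Let (R, m) be a regular local ring with regular system of parameters u = (u_1, …, u_n), and let ν be a valuation centered on R whose value group is archimedean. Let ν_{0,u} be the monomial valuation on R associated to u and to the values β_i = ν(u_i), defined by ν_{0,u}(f) = max{ γ | f ∈ I_γ } where I_γ is the ideal generated by monomials u^α with Σ α_i β_i ≥ γ. Then for every nonzero f ∈ R one has ν_{0,u}(f) ≤ ν(f). -/

import Mathlib

/-- Let `(R, m)` be a regular local ring with regular system of
parameters `u` and ν a valuation centered on `R` with archimedean value group.  Let
`ν_{0,u}` be the monomial valuation associated to `u` and `β_i = ν(u_i)`, characterized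
by `ν_{0,u}(f) = max {γ | f ∈ I_γ}` where `I_γ` is the monomial ideal of weighted order
`≥ γ`.  Then `ν_{0,u}(f) ≤ ν(f)` for every nonzero `f ∈ R`. -/
theorem monomial_valuation_le
    {R : Type*} [CommRing R] [IsLocalRing R] [IsNoetherianRing R]
    {n : ℕ} (u : Fin n → R)
    (hu : IsLocalRing.maximalIdeal R = Ideal.span (Set.range u))
    (hdim : ringKrullDim R = n)
    {Γ : Type*} [AddCommGroup Γ] [LinearOrder Γ] [IsOrderedAddMonoid Γ] [Archimedean Γ]
    (v : R → WithTop Γ)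
    (hv1 : v 1 = 0)
    (hmul : ∀ a b, v (a * b) = v a + v b)
    (hadd : ∀ a b, min (v a) (v b) ≤ v (a + b))
    (hnonneg : ∀ a, 0 ≤ v a)
    (β : Fin n → Γ) (hβ : ∀ i, v (u i) = (β i : WithTop Γ) ∧ 0 < β i)
    (I : Γ → Ideal R)
    (hI : ∀ γ, I γ = Ideal.span
      {m | ∃ α : Fin n → ℕ, m = ∏ i, u i ^ α i ∧ γ ≤ ∑ i, α i • β i})
    (ν₀ : R → Γ)
    (hν₀ : ∀ f : R, f ≠ 0 → f ∈ I (ν₀ f) ∧ ∀ γ : Γ, f ∈ I γ → γ ≤ ν₀ f) :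
    ∀ f : R, f ≠ 0 → (ν₀ f : WithTop Γ) ≤ v f := by
  -- v of a power
  have hpow : ∀ (x : R) (k : ℕ), v (x ^ k) = k • v x := by
    intro x k
    induction k with
    | zero => simpa using hv1
    | succ k ih => rw [pow_succ, hmul, ih, succ_nsmul]
  -- v of a monomial
  have hprod : ∀ (s : Finset (Fin n)) (α : Fin n → ℕ),
      v (∏ i ∈ s, u i ^ α i) = ((∑ i ∈ s, α i • β i : Γ) : WithTop Γ) := by
    intro s
    induction s using Finset.induction with
    | empty => intro α; simpa using hv1
    | @insert a s ha ih =>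
      intro α
      rw [Finset.prod_insert ha, Finset.sum_insert ha, hmul, ih, hpow, (hβ a).1]
      push_cast
      rfl
  -- every nonzero element of I γ has value ≥ γ
  have key : ∀ (γ : Γ) (x : R), x ∈ I γ → x = 0 ∨ (γ : WithTop Γ) ≤ v x := by
    intro γ x hx
    rw [hI] at hx
    induction hx using Submodule.span_induction with
    | mem m hm =>
      obtain ⟨α, rfl, hle⟩ := hm
      right
      rw [hprod Finset.univ α]
      exact_mod_cast hle
    | zero => exact Or.inl rfl
    | add x y _ _ hx hy =>
      rcases hx with rfl | hx
      · simpa using hy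
      rcases hy with rfl | hy
      · right; simpa using hx
      · right
        refine le_trans ?_ (hadd x y)
        exact le_min hx hy
    | smul r x _ hx =>
      rcases hx with rfl | hx
      · left; simp
      · right
        rw [smul_eq_mul, hmul]
        calc (γ : WithTop Γ) = 0 + γ := by rw [zero_add]
          _ ≤ v r + v x := add_le_add (hnonneg r) hx
  intro f hf
  rcases key (ν₀ f) f (hν₀ f hf).1 with rfl | h
  · exact absurd rfl hf
  · exact h
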